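/- Let g(z) = a·z² with a ∈ ℂ, a ≠ 0, and let λ ∈ ℂ with 0 < |λ| ≤ 2|a|. Then exp(g/λ) does not belong to F^∞_{ψ_m}, i.e., sup_{z∈ℂ} exp(Re(a·z²/λ) − ψ_m(z)) = ∞ for every nonnegative integer m ≥ 1 (and also for m = 0 when |λ| < 2|a|). -/

import Mathlib

/-- The weight function ψ_m(z) = |z|²/2 − m·log(1+|z|). -/
noncomputable def psi (m : ℕ) (z : ℂ) : ℝ :=
  ‖z‖ ^ 2 / 2 - m * Real.log (1 + ‖z‖)

/-- For g(z) = az² (a ≠ 0) and 0 < |λ| ≤ 2|a|, the function exp(g/λ) does not belong to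
F^∞_{ψ_m}: sup_z exp(Re(az²/λ) − ψ_m(z)) = ∞, for every m ≥ 1,
and also for m = 0 when |λ| < 2|a|. -/
theorem stmt_6 (m : ℕ) (a lam : ℂ) (ha : a ≠ 0)
    (h0 : 0 < ‖lam‖) (h1 : ‖lam‖ ≤ 2 * ‖a‖)
    (h2 : 1 ≤ m ∨ ‖lam‖ < 2 * ‖a‖) :
    ¬ BddAbove (Set.range fun z : ℂ => Real.exp ((a * z ^ 2 / lam).re - psi m z)) := by
  rintro ⟨M, hM⟩
  have hM' : ∀ z : ℂ, Real.exp ((a * z ^ 2 / lam).re - psi m z) ≤ M := fun z =>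
    hM (Set.mem_range_self z)
  have hla : lam ≠ 0 := by
    intro h; rw [h] at h0; simp at h0
  set r := ‖a‖ / ‖lam‖ with hr
  have hr2 : (1:ℝ)/2 ≤ r := by
    rw [hr, le_div_iff₀ h0]; linarith
  obtain ⟨w, hw⟩ := IsAlgClosed.exists_pow_nat_eq ((r : ℂ) * lam / a) (n := 2) (by norm_num)
  have hrpos : 0 < r := by positivity
  have hwabs : ‖w‖ = 1 := by
    have h : ‖w‖ ^ 2 = 1 := by
      rw [← norm_pow, hw, norm_div, norm_mul, Complex.norm_real, Real.norm_eq_abs,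
        abs_of_nonneg hrpos.le, hr]
      field_simp
    nlinarith [norm_nonneg w]
  have key : ∀ t : ℝ, 0 ≤ t →
      (a * ((t:ℂ) * w) ^ 2 / lam).re - psi m ((t:ℂ) * w) =
      (r - 1/2) * t ^ 2 + m * Real.log (1 + t) := by
    intro t ht
    have hval : a * ((t:ℂ) * w) ^ 2 / lam = ((t ^ 2 * r : ℝ) : ℂ) := by
      rw [mul_pow, hw]
      field_simp
      push_cast
      ring
    have habs : ‖(t:ℂ) * w‖ = t := by
      rw [norm_mul, Complex.norm_real, Real.norm_eq_abs, hwabs, abs_of_nonneg ht, mul_one]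
    rw [hval, Complex.ofReal_re, psi, habs]
    push_cast
    ring
  have hM0 : 0 < M := lt_of_lt_of_le (Real.exp_pos _) (hM' 0)
  rcases h2 with hm | hlt
  · -- m ≥ 1 case
    set t := max M 1 with htdef
    have ht0 : (0:ℝ) ≤ t := le_trans zero_le_one (le_max_right _ _)
    have hlog : 0 ≤ Real.log (1 + t) := Real.log_nonneg (by linarith)
    have hE : (r - 1/2) * t ^ 2 + m * Real.log (1 + t) ≥ m * Real.log (1 + t) := by
      nlinarith
    have h3 := hM' ((t:ℂ) * w)
    rw [key t ht0] at h3
    have h4 : Real.exp ((m:ℝ) * Real.log (1 + t)) = (1 + t) ^ m := by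
      rw [Real.exp_nat_mul, Real.exp_log (by linarith)]
    have h5 : (1 + t) ≤ (1 + t) ^ m := le_self_pow₀ (by linarith) (by omega)
    have h6 : Real.exp ((m:ℝ) * Real.log (1 + t)) ≤ M :=
      le_trans (Real.exp_le_exp.mpr hE) h3
    rw [h4] at h6
    have : M < 1 + t := by
      have := le_max_left M 1
      linarith
    linarith
  · -- r > 1/2 case
    have hr3 : (1:ℝ)/2 < r := by
      rw [hr, lt_div_iff₀ h0]; linarith
    set L := max (Real.log M) 0 with hL
    set t := Real.sqrt ((L + 1) / (r - 1/2)) with htdef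
    have ht0 : (0:ℝ) ≤ t := Real.sqrt_nonneg _
    have hLpos : 0 ≤ L := le_max_right _ _
    have ht2 : t ^ 2 = (L + 1) / (r - 1/2) := by
      rw [htdef, Real.sq_sqrt]
      exact div_nonneg (by linarith) (by linarith)
    have hlog : 0 ≤ Real.log (1 + t) := Real.log_nonneg (by linarith)
    have hE : Real.log M < (r - 1/2) * t ^ 2 + m * Real.log (1 + t) := by
      have h7 : (r - 1/2) * t ^ 2 = L + 1 := by
        have hne : r - 1/2 ≠ 0 := by linarith
        rw [ht2, mul_comm, div_mul_cancel₀ _ hne]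
      have h8 : Real.log M ≤ L := le_max_left _ _
      have h9 : 0 ≤ (m:ℝ) * Real.log (1 + t) := by positivity
      linarith
    have h3 := hM' ((t:ℂ) * w)
    rw [key t ht0] at h3
    have : M < Real.exp ((r - 1/2) * t ^ 2 + m * Real.log (1 + t)) := by
      calc M = Real.exp (Real.log M) := (Real.exp_log hM0).symm
        _ < _ := Real.exp_lt_exp.mpr hE
    linarith
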